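/- Let X and Y be finite-dimensional real vector spaces and let α, β : X → Y be linear maps. If β(ker α) ∩ im α = {0} in Y, then for all but finitely many scalars ε ∈ ℝ one has ker(α + εβ) = ker α ∩ ker β. (This is the kernel part of the Perturbation Lemma: a generic linear combination of α and β has kernel equal to ker α ∩ ker β.) -/

import Mathlib

/-- **Perturbation Lemma, kernel part.**
If `β (ker α) ⊓ range α = ⊥`, then for all but finitely many `ε : ℝ`,
`ker (α + ε • β) = ker α ⊓ ker β`. -/
theorem perturbation_lemma_kernel
    (X Y : Type*) [AddCommGroup X] [Module ℝ X] [FiniteDimensional ℝ X]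
    [AddCommGroup Y] [Module ℝ Y] [FiniteDimensional ℝ Y]
    (α β : X →ₗ[ℝ] Y)
    (h : (LinearMap.ker α).map β ⊓ LinearMap.range α = ⊥) :
    {ε : ℝ |
      LinearMap.ker (α + ε • β) ≠ LinearMap.ker α ⊓ LinearMap.ker β}.Finite := by
  classical
  -- Key consequence of the hypothesis `h`.
  have key : ∀ x : X, α x = 0 → β x ∈ LinearMap.range α → β x = 0 := by
    intro x hx hxr
    have hmem : β x ∈ (LinearMap.ker α).map β ⊓ LinearMap.range α :=
      ⟨Submodule.mem_map_of_mem (by simpa [LinearMap.mem_ker] using hx), hxr⟩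
    rw [h] at hmem
    simpa using hmem
  -- `X₀` is the preimage of `range α` under `β`.
  set X₀ : Submodule ℝ X := (LinearMap.range α).comap β with hX₀def
  set A : X₀ →ₗ[ℝ] Y := α.comp X₀.subtype with hAdef
  set p : Submodule ℝ Y := LinearMap.range A with hpdef
  obtain ⟨σ, hσ⟩ := A.rangeRestrict.exists_rightInverse_of_surjective
    (LinearMap.range_eq_top.2 A.surjective_rangeRestrict)
  obtain ⟨q, hq⟩ := p.exists_isCompl
  set π : Y →ₗ[ℝ] p := p.projectionOnto q hq with hπdef
  set g : Y →ₗ[ℝ] Y := ((β.comp X₀.subtype).comp σ).comp π with hgdef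
  -- `g` satisfies `g (α x) = β x` whenever `β x ∈ range α`.
  have hg : ∀ x : X, β x ∈ LinearMap.range α → g (α x) = β x := by
    intro x hx
    have hxX₀ : x ∈ X₀ := hx
    have hαp : α x ∈ p := ⟨⟨x, hxX₀⟩, rfl⟩
    have hπx : π (α x) = ⟨α x, hαp⟩ := by
      simpa using Submodule.projectionOnto_apply_left hq ⟨α x, hαp⟩
    set x' : X₀ := σ ⟨α x, hαp⟩ with hx'def
    have hαx' : α (x' : X) = α x := by
      have := congrArg Subtype.val (LinearMap.congr_fun hσ ⟨α x, hαp⟩)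
      simpa [A, LinearMap.comp_apply] using this
    have hβx' : β (x' : X) = β x := by
      have h1 : α (x - (x' : X)) = 0 := by
        simp [map_sub, hαx']
      have h2 : β (x - (x' : X)) ∈ LinearMap.range α := by
        have hx'r : β (x' : X) ∈ LinearMap.range α := x'.2
        simpa [map_sub] using Submodule.sub_mem _ hx hx'r
      have := key _ h1 h2
      rw [map_sub, sub_eq_zero] at this
      exact this.symm
    calc g (α x) = β (x' : X) := by simp [g, hπx, x']
      _ = β x := hβx'
  -- If `ε ≠ 0` and `id + ε • g` is injective, then `ε` is "good".
  have main : ∀ ε : ℝ, ε ≠ 0 → Function.Injective ((LinearMap.id : Y →ₗ[ℝ] Y) + ε • g) →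
      LinearMap.ker (α + ε • β) = LinearMap.ker α ⊓ LinearMap.ker β := by
    intro ε hε hinj
    apply le_antisymm
    · intro x hx
      have hx0 : α x + ε • β x = 0 := by simpa using hx
      have hβr : β x ∈ LinearMap.range α := by
        have h1 : ε • β x = -α x := by linear_combination (norm := module) hx0
        have h2 : β x = -(ε⁻¹ • α x) := by
          have h3 := congrArg (fun y : Y => ε⁻¹ • y) h1
          simpa [inv_smul_smul₀ hε, smul_neg] using h3
        rw [h2]
        exact Submodule.neg_mem _ (Submodule.smul_mem _ _ (LinearMap.mem_range_self α x))
      have hgx : g (α x) = β x := hg x hβr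
      have : ((LinearMap.id : Y →ₗ[ℝ] Y) + ε • g) (α x) = 0 := by
        simp [LinearMap.add_apply, hgx]
        simpa using hx0
      have hαx : α x = 0 := by
        apply hinj
        simpa using this
      have hβx : β x = 0 := by
        have : ε • β x = 0 := by simpa [hαx] using hx0
        exact (smul_eq_zero.1 this).resolve_left hε
      exact ⟨by simpa [LinearMap.mem_ker] using hαx, by simpa [LinearMap.mem_ker] using hβx⟩
    · intro x hx
      have hx' := Submodule.mem_inf.1 hx
      have h1 : α x = 0 := LinearMap.mem_ker.1 hx'.1
      have h2 : β x = 0 := LinearMap.mem_ker.1 hx'.2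
      exact LinearMap.mem_ker.2 (by simp [h1, h2])
  -- The set of `ε` where `id + ε • g` fails to be injective is finite.
  have hfin : {ε : ℝ | ¬ Function.Injective ((LinearMap.id : Y →ₗ[ℝ] Y) + ε • g)}.Finite := by
    have hsub : {ε : ℝ | ¬ Function.Injective ((LinearMap.id : Y →ₗ[ℝ] Y) + ε • g)} ⊆
        (fun μ : ℝ => -μ⁻¹) '' {μ : ℝ | (minpoly ℝ g).IsRoot μ} := by
      intro ε hε
      simp only [Set.mem_setOf_eq] at hε
      have hεne : ε ≠ 0 := by
        rintro rfl
        exact hε (by simpa using Function.injective_id)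
      have hker : LinearMap.ker ((LinearMap.id : Y →ₗ[ℝ] Y) + ε • g) ≠ ⊥ := by
        intro hk
        exact hε (LinearMap.ker_eq_bot.1 hk)
      obtain ⟨y, hy, hy0⟩ := Submodule.exists_mem_ne_zero_of_ne_bot hker
      have hyk : y + ε • g y = 0 := by simpa using hy
      have heig : g y = (-ε⁻¹) • y := by
        have h1 : ε • g y = -y := by linear_combination (norm := module) hyk
        have h3 := congrArg (fun z : Y => ε⁻¹ • z) h1
        simpa [inv_smul_smul₀ hεne, smul_neg, neg_smul] using h3
      have hev : Module.End.HasEigenvalue g (-ε⁻¹) :=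
        Module.End.hasEigenvalue_of_hasEigenvector
          ⟨Module.End.mem_eigenspace_iff.2 heig, hy0⟩
      refine ⟨-ε⁻¹, ?_, by field_simp⟩
      exact (Module.End.hasEigenvalue_iff_isRoot).1 hev
    exact Set.Finite.subset
      ((Polynomial.finite_setOf_isRoot
        (minpoly.ne_zero (Algebra.IsIntegral.isIntegral (R := ℝ) g))).image _) hsub
  refine Set.Finite.subset (hfin.insert 0) ?_
  intro ε hεbad
  simp only [Set.mem_setOf_eq] at hεbad
  by_contra hc
  simp only [Set.mem_insert_iff, Set.mem_setOf_eq, not_or, not_not] at hc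
  exact hεbad (main ε hc.1 hc.2)
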